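/- arXiv:2205.11391 — 3 statements merged into one kernel-verified Lean document; each statement's English description precedes it below -/
import Mathlib

section
/- Let E be a connected, locally path-connected topological space, let S ⊆ E be a path-connected, locally path-connected subspace with inclusion map i : S → E, and let x ∈ S. Let p : Ẽ → E be a covering map with Ẽ path-connected, and let x̂ ∈ p⁻¹(x) be such that p_*(π₁(Ẽ, x̂)) = i_*(π₁(S, x)) as subgroups of π₁(E, x). If in addition p is a normal covering, i.e. p_*(π₁(Ẽ, x̂)) is a normal subgroup of π₁(E, x), then p maps every path component of p⁻¹(S) homeomorphically onto S. -/
open CategoryTheory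

universe u

/-- The homomorphism on fundamental groups induced by a continuous map. -/
noncomputable def piMap {X Y : Type u} [TopologicalSpace X] [TopologicalSpace Y]
    (f : C(X, Y)) (x : X) :
    FundamentalGroup X x →* FundamentalGroup Y (f x) :=
  CategoryTheory.Functor.mapEnd (X := FundamentalGroupoid.mk x)
    (FundamentalGroupoid.fundamentalGroupoidFunctor.map (X := TopCat.of X) (Y := TopCat.of Y) (TopCat.ofHom f))

attribute [local instance] Path.Homotopic.setoid

/-- hom of a piMap image -/
theorem piMap_hom {X Y : Type u} [TopologicalSpace X] [TopologicalSpace Y]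
    (f : C(X, Y)) (x : X) (g : FundamentalGroup X x) :
    (piMap f x g) =
      (FundamentalGroupoid.fundamentalGroupoidFunctor.map
        (X := TopCat.of X) (Y := TopCat.of Y) (TopCat.ofHom f)).map g := rfl

theorem mem_piMap_range_iff {X Y : Type u} [TopologicalSpace X] [TopologicalSpace Y]
    (f : C(X, Y)) (x : X) (g : FundamentalGroup Y (f x)) :
    g ∈ (piMap f x).range ↔
      ∃ α : Path x x,
        (⟦α.map f.continuous⟧ : Path.Homotopic.Quotient (f x) (f x)) = g := by
  constructor
  · rintro ⟨g', rfl⟩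
    obtain ⟨α, hα⟩ := Quotient.exists_rep
      (g' : Path.Homotopic.Quotient x x)
    refine ⟨α, ?_⟩
    rw [piMap_hom, ← hα]
    exact Path.Homotopic.Quotient.mk_map α f
  · rintro ⟨α, hα⟩
    refine ⟨(⟦α⟧ : Path.Homotopic.Quotient x x), ?_⟩
    show (FundamentalGroupoid.fundamentalGroupoidFunctor.map
        (X := TopCat.of X) (Y := TopCat.of Y) (TopCat.ofHom f)).map
        (⟦α⟧ : Path.Homotopic.Quotient x x) = g
    exact hα

section Lifting
open Set

variable {Etot X : Type*} [TopologicalSpace Etot] [TopologicalSpace X] {p : Etot → X}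

/-- Gluing lemma for `ContinuousOn` over a union. -/
theorem continuousOn_union_glue {Z W : Type*} [TopologicalSpace Z] [TopologicalSpace W]
    {F G h : Z → W} {A B : Set Z} (hF : ContinuousOn F A) (hG : ContinuousOn G B)
    (hFh : Set.EqOn h F A) (hGh : Set.EqOn h G B)
    (hA : A ∩ closure B ⊆ B) (hB : B ∩ closure A ⊆ A) :
    ContinuousOn h (A ∪ B) := by
  intro x hx
  have cwA : x ∈ A → ContinuousWithinAt h A x := fun hxA =>
    ((hF x hxA).congr hFh (hFh hxA))
  have cwB : x ∈ B → ContinuousWithinAt h B x := fun hxB =>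
    ((hG x hxB).congr hGh (hGh hxB))
  rcases hx with hxA | hxB
  · by_cases hxB : x ∈ B
    · exact (cwA hxA).union (cwB hxB)
    · have : x ∉ closure B := fun hc => hxB (hA ⟨hxA, hc⟩)
      exact (cwA hxA).union (continuousWithinAt_of_notMem_closure this)
  · by_cases hxA : x ∈ A
    · exact (cwA hxA).union (cwB hxB)
    · have : x ∉ closure A := fun hc => hxA (hB ⟨hxB, hc⟩)
      exact (continuousWithinAt_of_notMem_closure this).union (cwB hxB)

/-- Local lifting of a two-parameter family along a covering map. -/
theorem key_lift (hp : IsCoveringMap p) (H : ℝ × ℝ → X) (hH : Continuous H)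
    (s₀ : ℝ) (e : Etot) (he : p e = H (s₀, 0)) :
    ∃ (W : Set ℝ) (F : ℝ × ℝ → Etot), IsOpen W ∧ s₀ ∈ W ∧
      ContinuousOn F (W ×ˢ Icc (0:ℝ) 1) ∧
      (∀ q ∈ W ×ˢ Icc (0:ℝ) 1, p (F q) = H q) ∧ F (s₀, 0) = e := by
  classical
  -- the lifting predicate up to time `t`
  set P : ℝ → Prop := fun t => ∃ (W : Set ℝ) (F : ℝ × ℝ → Etot), IsOpen W ∧ s₀ ∈ W ∧
      ContinuousOn F (W ×ˢ Icc (0:ℝ) t) ∧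
      (∀ q ∈ W ×ˢ Icc (0:ℝ) t, p (F q) = H q) ∧ F (s₀, 0) = e with hP
  -- extension lemma
  have ext : ∀ a b : ℝ, 0 ≤ a → a ≤ b → P a →
      ∀ (Ft : Type _) (_ : TopologicalSpace Ft) (T : Bundle.Trivialization Ft p) (V : Set ℝ),
        IsOpen V → s₀ ∈ V → (∀ q ∈ V ×ˢ Icc a b, H q ∈ T.baseSet) → P b := by
    intro a b ha hab hPa Ft _ T V hVo hs₀V hT
    obtain ⟨W, F, hWo, hs₀W, hFc, hFp, hFe⟩ := hPa
    set W₁ : Set ℝ := W ∩ V with hW₁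
    have hW₁o : IsOpen W₁ := hWo.inter hVo
    have hs₀W₁ : s₀ ∈ W₁ := ⟨hs₀W, hs₀V⟩
    have hmemA : ∀ s ∈ W₁, (s, a) ∈ W ×ˢ Icc (0:ℝ) a := fun s hs =>
      ⟨hs.1, ha, le_rfl⟩
    have hsrc : ∀ s ∈ W₁, F (s, a) ∈ T.source := by
      intro s hs
      rw [T.mem_source, hFp _ (hmemA s hs)]
      exact hT (s, a) ⟨hs.2, le_rfl, hab⟩
    -- the fiber coordinate
    set σ : ℝ → Ft := fun s => (T (F (s, a))).2 with hσdef
    have hσc : ContinuousOn σ W₁ := by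
      have h1 : ContinuousOn (fun s : ℝ => F (s, a)) W₁ := by
        apply hFc.comp (Continuous.continuousOn (by fun_prop))
        intro s hs; exact hmemA s hs
      have h2 : ContinuousOn (fun s : ℝ => T (F (s, a))) W₁ :=
        T.toOpenPartialHomeomorph.continuousOn.comp h1 hsrc
      exact continuous_snd.comp_continuousOn h2
    set G : ℝ × ℝ → Etot := fun q => T.toOpenPartialHomeomorph.symm (H q, σ q.1) with hGdef
    have hGc : ContinuousOn G (W₁ ×ˢ Icc a b) := by
      apply T.toOpenPartialHomeomorph.continuousOn_symm.comp
      · exact hH.continuousOn.prodMk (hσc.comp continuous_fst.continuousOn (fun q hq => hq.1))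
      · intro q hq
        rw [T.target_eq]
        exact ⟨hT q ⟨hq.1.2, hq.2⟩, trivial⟩
    have hGp : ∀ q ∈ W₁ ×ˢ Icc a b, p (G q) = H q := by
      intro q hq
      exact T.proj_symm_apply (by rw [T.target_eq]; exact ⟨hT q ⟨hq.1.2, hq.2⟩, trivial⟩)
    have hmatch : ∀ s ∈ W₁, G (s, a) = F (s, a) := by
      intro s hs
      have h1 : (H (s, a), σ s) = T (F (s, a)) := by
        have := T.coe_fst (hsrc s hs)
        rw [hσdef]
        ext
        · simp only [this, hFp _ (hmemA s hs)]
        · rfl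
      rw [hGdef]
      simp only [h1]
      exact T.toOpenPartialHomeomorph.left_inv (hsrc s hs)
    set h : ℝ × ℝ → Etot := fun q => if q.2 ≤ a then F q else G q with hhdef
    have hhF : Set.EqOn h F (W₁ ×ˢ Icc (0:ℝ) a) := by
      intro q hq; simp only [hhdef, if_pos hq.2.2]
    have hhG : Set.EqOn h G (W₁ ×ˢ Icc a b) := by
      intro q hq
      by_cases hqa : q.2 ≤ a
      · have : q.2 = a := le_antisymm hqa hq.2.1
        have hq' : q = (q.1, a) := by ext <;> simp [this]
        rw [hhdef]
        simp only [if_pos hqa]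
        rw [hq', hmatch q.1 hq.1]
      · simp only [hhdef, if_neg hqa]
    have hcl1 : (W₁ ×ˢ Icc (0:ℝ) a) ∩ closure (W₁ ×ˢ Icc a b) ⊆ W₁ ×ˢ Icc a b := by
      intro q ⟨hq1, hq2⟩
      have := closure_prod_eq (s := W₁) (t := Icc a b) ▸ hq2
      exact ⟨hq1.1, by simpa using this.2⟩
    have hcl2 : (W₁ ×ˢ Icc a b) ∩ closure (W₁ ×ˢ Icc (0:ℝ) a) ⊆ W₁ ×ˢ Icc (0:ℝ) a := by
      intro q ⟨hq1, hq2⟩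
      have := closure_prod_eq (s := W₁) (t := Icc (0:ℝ) a) ▸ hq2
      exact ⟨hq1.1, by simpa using this.2⟩
    have hunion : (W₁ ×ˢ Icc (0:ℝ) a) ∪ (W₁ ×ˢ Icc a b) = W₁ ×ˢ Icc (0:ℝ) b := by
      rw [← prod_union, Icc_union_Icc_eq_Icc ha hab]
    refine ⟨W₁, h, hW₁o, hs₀W₁, ?_, ?_, ?_⟩
    · rw [← hunion]
      exact continuousOn_union_glue (hFc.mono (prod_mono_left inter_subset_left)) hGc hhF hhG
        hcl1 hcl2
    · intro q hq
      by_cases hqa : q.2 ≤ a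
      · rw [hhF ⟨hq.1, hq.2.1, hqa⟩]
        exact hFp q ⟨hq.1.1, hq.2.1, hqa⟩
      · rw [hhG ⟨hq.1, le_of_not_ge hqa, hq.2.2⟩]
        exact hGp q ⟨hq.1, le_of_not_ge hqa, hq.2.2⟩
    · rw [hhF ⟨hs₀W₁, le_rfl, ha⟩]; exact hFe
  -- base case
  have hbase : P 0 := by
    haveI : Nonempty (p ⁻¹' {H (s₀, 0)}) := ⟨⟨e, he⟩⟩
    set T := (hp (H (s₀, 0))).toTrivialization with hT
    have hbs : H (s₀, 0) ∈ T.baseSet := IsEvenlyCovered.mem_toTrivialization_baseSet _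
    have hesrc : e ∈ T.source := by rw [T.mem_source, he]; exact hbs
    set W₀ : Set ℝ := (fun s => H (s, 0)) ⁻¹' T.baseSet with hW₀
    have hW₀o : IsOpen W₀ := T.open_baseSet.preimage (by fun_prop)
    set F₀ : ℝ × ℝ → Etot := fun q => T.toOpenPartialHomeomorph.symm (H (q.1, 0), (T e).2) with hF₀
    have hmem : ∀ q : ℝ × ℝ, q.1 ∈ W₀ → (H (q.1, 0), (T e).2) ∈ T.target := by
      intro q hq; rw [T.target_eq]; exact ⟨hq, trivial⟩
    refine ⟨W₀, F₀, hW₀o, by simpa [hW₀] using hbs, ?_, ?_, ?_⟩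
    · apply T.toOpenPartialHomeomorph.continuousOn_symm.comp
      · exact ((hH.comp (by fun_prop)).prodMk continuous_const).continuousOn
      · intro q hq; exact hmem q hq.1
    · intro q hq
      have h2 : q.2 = 0 := le_antisymm hq.2.2 hq.2.1
      have : q = (q.1, 0) := by ext <;> simp [h2]
      rw [this]
      exact T.proj_symm_apply (hmem _ hq.1)
    · show T.toOpenPartialHomeomorph.symm (H (s₀, 0), (T e).2) = e
      have : (H (s₀, 0), (T e).2) = T e := by
        ext
        · simp [T.coe_fst hesrc, he]
        · rfl
      rw [this]
      exact T.toOpenPartialHomeomorph.left_inv hesrc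
  -- the set of achieved times
  set A : Set ℝ := {t | 0 ≤ t ∧ t ≤ 1 ∧ P t} with hA
  have hA0 : (0:ℝ) ∈ A := ⟨le_rfl, zero_le_one, hbase⟩
  have hAne : A.Nonempty := ⟨0, hA0⟩
  have hAbdd : BddAbove A := ⟨1, fun t ht => ht.2.1⟩
  set c := sSup A with hc
  have hc0 : 0 ≤ c := le_csSup hAbdd hA0
  have hc1 : c ≤ 1 := csSup_le hAne (fun t ht => ht.2.1)
  -- evenly covered neighborhood around H (s₀, c)
  haveI : Nonempty (p ⁻¹' {H (s₀, c)}) := by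
    obtain ⟨_, U, hxU, hUo, _, Hh, _⟩ := hp (H (s₀, c))
    have hO : IsOpen ((fun t => H (s₀, t)) ⁻¹' U) := hUo.preimage (by fun_prop)
    obtain ⟨δ, hδ, hball⟩ := Metric.isOpen_iff.mp hO c hxU
    obtain ⟨t, htA, htc⟩ := exists_lt_of_lt_csSup hAne (show c - δ/2 < c by linarith)
    have htle : t ≤ c := le_csSup hAbdd htA
    obtain ⟨W, F, -, hs₀W, -, hFp, -⟩ := htA.2.2
    have hmemU : p (F (s₀, t)) ∈ U := by
      rw [hFp _ ⟨hs₀W, htA.1, le_rfl⟩]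
      refine hball (show t ∈ Metric.ball c δ from ?_)
      simp only [Metric.mem_ball, Real.dist_eq, abs_lt]
      constructor <;> linarith
    exact ⟨(Hh ⟨F (s₀, t), hmemU⟩).2⟩
  set T := (hp (H (s₀, c))).toTrivialization with hT
  have hbs : H (s₀, c) ∈ T.baseSet := IsEvenlyCovered.mem_toTrivialization_baseSet _
  have hopen : IsOpen (H ⁻¹' T.baseSet) := T.open_baseSet.preimage hH
  obtain ⟨u, v, huo, hvo, hs₀u, hcv, huv⟩ :=
    isOpen_prod_iff.mp hopen s₀ c hbs
  obtain ⟨δ, hδ, hball⟩ := Metric.isOpen_iff.mp hvo c hcv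
  obtain ⟨t, htA, htc⟩ := exists_lt_of_lt_csSup hAne (show c - δ/2 < c by linarith)
  have htle : t ≤ c := le_csSup hAbdd htA
  set b := min (c + δ/2) 1 with hb
  have hbA : b ∈ A := by
    have htb : t ≤ b := le_min (by linarith) htA.2.1
    have hPb : P b := by
      apply ext t b htA.1 htb htA.2.2 _ _ T u huo hs₀u
      intro q hq
      apply huv
      refine ⟨hq.1, hball ?_⟩
      simp only [Metric.mem_ball, Real.dist_eq, abs_lt]
      constructor
      · have : c - δ/2 < t := htc
        have : t ≤ q.2 := hq.2.1
        linarith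
      · have : q.2 ≤ b := hq.2.2
        have : b ≤ c + δ/2 := min_le_left _ _
        linarith
    exact ⟨le_trans htA.1 htb, min_le_right _ _, hPb⟩
  have hbc : b ≤ c := le_csSup hAbdd hbA
  have hceq : c = 1 := by
    by_contra hne
    have : c < 1 := lt_of_le_of_ne hc1 hne
    have : b > c := by
      rw [hb]
      apply lt_min <;> linarith
    linarith
  have : (1:ℝ) ∈ A := by
    have : b = 1 := by rw [hb, hceq]; simp; linarith
    rwa [← this]
  exact this.2.2

/-- Discrete fiber: an open set isolating a point of a fiber. -/
theorem fiber_isolate (hp : IsCoveringMap p) {x : X} {e : Etot} (he : p e = x) :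
    ∃ V : Set Etot, IsOpen V ∧ e ∈ V ∧ ∀ y ∈ V, p y = x → y = e := by
  have : DiscreteTopology (p ⁻¹' {x}) := (hp x).1
  have hopen : IsOpen ({⟨e, he⟩} : Set (p ⁻¹' {x})) := isOpen_discrete _
  rw [isOpen_induced_iff] at hopen
  obtain ⟨V, hVo, hV⟩ := hopen
  refine ⟨V, hVo, ?_, ?_⟩
  · have : (⟨e, he⟩ : p ⁻¹' {x}) ∈ Subtype.val ⁻¹' V := by rw [hV]; rfl
    exact this
  · intro y hy hyx
    have : (⟨y, hyx⟩ : p ⁻¹' {x}) ∈ Subtype.val ⁻¹' V := hy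
    rw [hV] at this
    exact congrArg Subtype.val this

/-- Monodromy: lifts of the two ends of a homotopy (rel endpoints) starting at the same
point end at the same point. -/
theorem monodromy_lift (hp : IsCoveringMap p) (H : ℝ × ℝ → X) (hH : Continuous H)
    (x₀ x₁ : X) (h0 : ∀ s, H (s, 0) = x₀) (h1 : ∀ s, H (s, 1) = x₁)
    (e : Etot) (he : p e = x₀)
    (Γ₀ Γ₁ : ℝ → Etot)
    (hΓ₀c : ContinuousOn Γ₀ (Icc 0 1)) (hΓ₀p : ∀ t ∈ Icc (0:ℝ) 1, p (Γ₀ t) = H (0, t))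
    (hΓ₀0 : Γ₀ 0 = e)
    (hΓ₁c : ContinuousOn Γ₁ (Icc 0 1)) (hΓ₁p : ∀ t ∈ Icc (0:ℝ) 1, p (Γ₁ t) = H (1, t))
    (hΓ₁0 : Γ₁ 0 = e) : Γ₀ 1 = Γ₁ 1 := by
  classical
  -- chosen lifts
  have hlift : ∀ s : ℝ, ∃ (W : Set ℝ) (F : ℝ × ℝ → Etot), IsOpen W ∧ s ∈ W ∧
      ContinuousOn F (W ×ˢ Icc (0:ℝ) 1) ∧
      (∀ q ∈ W ×ˢ Icc (0:ℝ) 1, p (F q) = H q) ∧ F (s, 0) = e := by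
    intro s
    exact key_lift hp H hH s e (by rw [he, h0])
  choose W F hWo hsW hFc hFp hF0 using hlift
  set ep : ℝ → Etot := fun s => F s (s, 1) with hep
  -- key local claim
  have loc : ∀ s₀ : ℝ, ∃ O : Set ℝ, IsOpen O ∧ s₀ ∈ O ∧ ∀ s ∈ O,
      (∀ Γ : ℝ → Etot, ContinuousOn Γ (Icc 0 1) → (∀ t ∈ Icc (0:ℝ) 1, p (Γ t) = H (s, t)) →
        Γ 0 = e → Γ 1 = ep s₀) := by
    intro s₀
    obtain ⟨V₀, hV₀o, heV₀, hV₀⟩ := fiber_isolate hp he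
    have hc10 : p (F s₀ (s₀, 1)) = x₁ := by
      rw [hFp s₀ (s₀, 1) ⟨hsW s₀, zero_le_one, le_rfl⟩, h1]
    obtain ⟨V₁, hV₁o, hcV₁, hV₁⟩ := fiber_isolate hp hc10
    -- continuity of slices
    have hslice0 : ContinuousOn (fun s => F s₀ (s, 0)) (W s₀) := by
      apply (hFc s₀).comp (Continuous.continuousOn (by fun_prop))
      intro s hs; exact ⟨hs, le_rfl, zero_le_one⟩
    have hslice1 : ContinuousOn (fun s => F s₀ (s, 1)) (W s₀) := by
      apply (hFc s₀).comp (Continuous.continuousOn (by fun_prop))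
      intro s hs; exact ⟨hs, zero_le_one, le_rfl⟩
    set O : Set ℝ := (W s₀ ∩ (fun s => F s₀ (s, 0)) ⁻¹' V₀) ∩
        (fun s => F s₀ (s, 1)) ⁻¹' V₁ with hO
    have hO1 : IsOpen (W s₀ ∩ (fun s => F s₀ (s, 0)) ⁻¹' V₀) :=
      hslice0.isOpen_inter_preimage (hWo s₀) hV₀o
    have hOo : IsOpen O :=
      (hslice1.mono inter_subset_left).isOpen_inter_preimage hO1 hV₁o
    have hs₀O : s₀ ∈ O := by
      refine ⟨⟨hsW s₀, ?_⟩, hcV₁⟩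
      show F s₀ (s₀, 0) ∈ V₀
      rw [hF0 s₀]; exact heV₀
    refine ⟨O, hOo, hs₀O, ?_⟩
    intro s hs Γ hΓc hΓp hΓ0
    have hsWs : s ∈ W s₀ := hs.1.1
    -- F s₀ (s, ⬝) is a lift of H (s, ⬝) starting at e
    have hFs0 : F s₀ (s, 0) = e := by
      apply hV₀ _ hs.1.2
      rw [hFp s₀ (s, 0) ⟨hsWs, le_rfl, zero_le_one⟩, h0]
    have hFsc : ContinuousOn (fun t => F s₀ (s, t)) (Icc 0 1) := by
      apply (hFc s₀).comp (Continuous.continuousOn (by fun_prop))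
      intro t ht; exact ⟨hsWs, ht⟩
    have huniq : Set.EqOn Γ (fun t => F s₀ (s, t)) (Icc 0 1) := by
      apply hp.eqOn_of_comp_eqOn isPreconnected_Icc hΓc hFsc
      · intro t ht
        show p (Γ t) = p (F s₀ (s, t))
        rw [hΓp t ht, hFp s₀ (s, t) ⟨hsWs, ht⟩]
      · exact ⟨le_rfl, zero_le_one⟩
      · rw [hΓ0, hFs0]
    have hΓ1 : Γ 1 = F s₀ (s, 1) := huniq ⟨zero_le_one, le_rfl⟩
    have hFs1 : F s₀ (s, 1) = F s₀ (s₀, 1) := by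
      apply hV₁ _ hs.2
      rw [hFp s₀ (s, 1) ⟨hsWs, zero_le_one, le_rfl⟩, h1]
    rw [hΓ1, hFs1]
  -- ep is locally constant, hence constant
  have hepconst : ep 0 = ep 1 := by
    have hlc : IsLocallyConstant ep := by
      rw [IsLocallyConstant.iff_exists_open]
      intro s₀
      obtain ⟨O, hOo, hs₀O, hO⟩ := loc s₀
      refine ⟨O, hOo, hs₀O, ?_⟩
      intro s hsO
      -- ep s is the endpoint of the lift F s (s, ⬝), which starts at e
      have h1' : ep s = ep s₀ := by
        apply hO s hsO (fun t => F s (s, t))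
        · apply (hFc s).comp (Continuous.continuousOn (by fun_prop))
          intro t ht; exact ⟨hsW s, ht⟩
        · intro t ht; exact hFp s (s, t) ⟨hsW s, ht⟩
        · exact hF0 s
      exact h1'
    exact hlc.apply_eq_of_preconnectedSpace 0 1
  obtain ⟨O₀, hO₀o, h0O₀, hO₀⟩ := loc 0
  obtain ⟨O₁, hO₁o, h1O₁, hO₁⟩ := loc 1
  have e0 : Γ₀ 1 = ep 0 := hO₀ 0 h0O₀ Γ₀ hΓ₀c hΓ₀p hΓ₀0
  have e1 : Γ₁ 1 = ep 1 := hO₁ 1 h1O₁ Γ₁ hΓ₁c hΓ₁p hΓ₁0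
  rw [e0, e1, hepconst]

/-- Path lifting for covering maps. -/
theorem path_lift (hp : IsCoveringMap p) {a b : X} (γ : Path a b) (e : Etot) (he : p e = a) :
    ∃ (e' : Etot) (Γ : Path e e'), ∀ t, p (Γ t) = γ t := by
  obtain ⟨W, F, hWo, h0W, hFc, hFp, hF0⟩ := key_lift hp (fun q => γ.extend q.2)
    (γ.continuous_extend.comp continuous_snd) 0 e (by rw [he]; simp)
  have hmem : ∀ t : unitInterval, ((0:ℝ), (t:ℝ)) ∈ W ×ˢ Icc (0:ℝ) 1 := fun t => ⟨h0W, t.2⟩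
  have hcont : Continuous fun t : unitInterval => F (0, (t:ℝ)) := by
    apply hFc.comp_continuous (by fun_prop) hmem
  refine ⟨F (0, 1), ⟨⟨fun t => F (0, (t:ℝ)), hcont⟩, ?_, ?_⟩, ?_⟩
  · show F (0, ((0:unitInterval):ℝ)) = e
    simpa using hF0
  · show F (0, ((1:unitInterval):ℝ)) = F (0, 1)
    norm_num
  · intro t
    show p (F (0, (t:ℝ))) = γ t
    rw [hFp _ (hmem t)]
    exact γ.extend_extends' _

/-- Lifts of homotopic paths starting at the same point end at the same point. -/
theorem lift_endpoint_eq (hp : IsCoveringMap p) {a b : X} {γ₀ γ₁ : Path a b}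
    (hhom : γ₀.Homotopic γ₁) {e e₀ e₁ : Etot} (Γ₀ : Path e e₀) (Γ₁ : Path e e₁)
    (he : p e = a)
    (h₀ : ∀ t, p (Γ₀ t) = γ₀ t) (h₁ : ∀ t, p (Γ₁ t) = γ₁ t) : e₀ = e₁ := by
  obtain ⟨Hty⟩ := hhom
  set pr : ℝ → unitInterval := Set.projIcc 0 1 zero_le_one with hpr
  have hprc : Continuous pr := continuous_projIcc
  set H : ℝ × ℝ → X := fun q => Hty (pr q.1, pr q.2) with hH
  have hHc : Continuous H := Hty.continuous.comp (by fun_prop)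
  have key : ∀ (c : Path a b) (ec : Etot) (Γ : Path e ec), (∀ t, p (Γ t) = c t) →
      (∀ t ∈ Icc (0:ℝ) 1, c (pr t) = H ((if True then 1 else 0), t)) → True := fun _ _ _ _ _ => trivial
  have h0' : ∀ s, H (s, 0) = a := by
    intro s
    show Hty (pr s, pr 0) = a
    rw [hpr]; simp only [Set.projIcc_left]
    exact Hty.source (pr s)
  have h1' : ∀ s, H (s, 1) = b := by
    intro s
    show Hty (pr s, pr 1) = b
    rw [hpr]; simp only [Set.projIcc_right]
    exact Hty.target (pr s)
  have hpr0 : pr 0 = 0 := Set.projIcc_left _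
  have hpr1 : pr 1 = 1 := Set.projIcc_right _
  have hmono : Γ₀.extend 1 = Γ₁.extend 1 := by
    refine monodromy_lift hp H hHc a b h0' h1' e he
      (fun t => Γ₀.extend t) (fun t => Γ₁.extend t)
      Γ₀.continuous_extend.continuousOn ?_ (by simp)
      Γ₁.continuous_extend.continuousOn ?_ (by simp)
    · intro t ht
      show p (Γ₀.extend t) = Hty (pr 0, pr t)
      rw [hpr0, Hty.apply_zero]
      exact h₀ (pr t)
    · intro t ht
      show p (Γ₁.extend t) = Hty (pr 1, pr t)
      rw [hpr1, Hty.apply_one]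
      exact h₁ (pr t)
  simpa using hmono

end Lifting

section Core
attribute [local instance] Path.Homotopic.setoid

open FundamentalGroupoid (mk)

/-- A path as a morphism in the fundamental groupoid. -/
noncomputable def pathHom {Z : Type u} [TopologicalSpace Z] {u v : Z} (P : Path u v) :
    FundamentalGroupoid.mk u ⟶ FundamentalGroupoid.mk v := ⟦P⟧

theorem pathHom_trans {Z : Type u} [TopologicalSpace Z] {u v w : Z} (P : Path u v)
    (Q : Path v w) : pathHom (P.trans Q) = pathHom P ≫ pathHom Q := by
  show _ = CategoryStruct.comp (obj := FundamentalGroupoid Z) _ _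
  rw [FundamentalGroupoid.comp_eq]
  exact Path.Homotopic.Quotient.mk_trans P Q

theorem pathHom_symm {Z : Type u} [TopologicalSpace Z] {u v : Z} (P : Path u v) :
    pathHom P.symm = Groupoid.inv (pathHom P) := rfl

theorem inj_core {E E' : Type u} [TopologicalSpace E] [TopologicalSpace E']
    (S : Set E) (hSpc : IsPathConnected S)
    (p : E' → E) (hp : IsCoveringMap p) [PathConnectedSpace E']
    (xh : E') (hmem : p xh ∈ S)
    (hrange : (piMap ⟨p, hp.continuous⟩ xh).range
      = (piMap ⟨(Subtype.val : S → E), continuous_subtype_val⟩ ⟨p xh, hmem⟩).range)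
    (hnormal : (piMap ⟨p, hp.continuous⟩ xh).range.Normal)
    {z₁ z₂ : E'} (hz₁ : p z₁ ∈ S) (γ : Path z₁ z₂) (hγ : ∀ t, p (γ t) ∈ S)
    (hz : p z₂ = p z₁) : z₂ = z₁ := by
  classical
  set pC : C(E', E) := ⟨p, hp.continuous⟩ with hpC
  set iC : C(S, E) := ⟨(Subtype.val : S → E), continuous_subtype_val⟩ with hiC
  set x₀ : S := ⟨p xh, hmem⟩ with hx₀
  -- paths
  set δ : Path xh z₁ := PathConnectedSpace.somePath xh z₁ with hδ
  set d : Path (p xh) (p z₁) := δ.map hp.continuous with hd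
  set σS : Path x₀ (⟨p z₁, hz₁⟩ : S) :=
    ((hSpc.joinedIn _ hmem _ hz₁).joined_subtype).somePath with hσS
  set γS : Path (⟨p z₁, hz₁⟩ : S) (⟨p z₁, hz₁⟩ : S) :=
    { toFun := fun t => ⟨p (γ t), hγ t⟩
      continuous_toFun := ((hp.continuous.comp γ.continuous).subtype_mk _)
      source' := Subtype.ext (by simp)
      target' := Subtype.ext (by simp [hz]) } with hγS
  set lam : Path x₀ x₀ := σS.trans (γS.trans σS.symm) with hlam
  set m : Path (p xh) (p xh) := d.trans ((σS.map continuous_subtype_val).cast rfl rfl).symm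
    with hm
  -- the subgroup elements
  set elt : FundamentalGroup E (p xh) := piMap iC x₀
    (⟦lam⟧ : Path.Homotopic.Quotient x₀ x₀) with helt_def
  have helt : elt ∈ (piMap pC xh).range := by
    rw [hrange]; exact ⟨_, rfl⟩
  set g : FundamentalGroup E (p xh) :=
    @Inv.inv (FundamentalGroup E (p xh)) _ (⟦m⟧ : Path.Homotopic.Quotient (p xh) (p xh)) with hg
  have hconj := hnormal.conj_mem elt helt g
  obtain ⟨α, hα⟩ := (mem_piMap_range_iff pC xh _).mp hconj
  -- hom algebra in the fundamental groupoid of E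
  set σE : Path (p xh) (p z₁) := σS.map continuous_subtype_val with hσE
  set γcast : Path (p z₁) (p z₁) := (γ.map hp.continuous).cast rfl hz.symm with hγcast
  set D : mk (p xh) ⟶ mk (p z₁) := pathHom d with hD
  set Sq : mk (p xh) ⟶ mk (p z₁) := pathHom σE with hSq
  set G : mk (p z₁) ⟶ mk (p z₁) := pathHom γcast with hG
  have hγSi : γS.map iC.continuous = γcast := by
    apply Path.ext
    rfl
  have e2 : elt = Sq ≫ G ≫ Groupoid.inv Sq := by
    have h3 : elt = pathHom (lam.map iC.continuous) := by
      rw [helt_def]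
      show (FundamentalGroupoid.fundamentalGroupoidFunctor.map
        (X := TopCat.of S) (Y := TopCat.of E) (TopCat.ofHom iC)).map
        (⟦lam⟧ : Path.Homotopic.Quotient x₀ x₀) = _
      rfl
    rw [h3, hlam, Path.map_trans, Path.map_trans, ← Path.map_symm]
    rw [show ((σS.map iC.continuous).trans ((γS.map iC.continuous).trans
        ((σS.map iC.continuous).symm)) : Path _ _) =
        (σE.trans (γcast.trans σE.symm) : Path (p xh) (p xh)) by rw [hγSi]]
    rw [pathHom_trans, pathHom_trans, pathHom_symm]
  have e1 : pathHom m = D ≫ Groupoid.inv Sq := by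
    rw [hm]
    rw [show (d.trans ((σS.map continuous_subtype_val).cast rfl rfl).symm : Path _ _)
        = (d.trans σE.symm : Path (p xh) (p xh)) by rfl]
    rw [pathHom_trans, pathHom_symm]
  have e3 : (g * elt * g⁻¹) = pathHom m ≫ elt ≫ Groupoid.inv (pathHom m) := by
    have hgi : g⁻¹ = (⟦m⟧ : Path.Homotopic.Quotient (p xh) (p xh)) := by rw [hg]; exact inv_inv (G := FundamentalGroup E (p xh)) _
    rw [End.mul_def, End.mul_def, hgi, hg]
    rfl
  -- conclude the homotopy
  set β : Path z₁ z₁ := δ.symm.trans (α.trans δ) with hβ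
  have hfinal : pathHom (β.map hp.continuous) = G := by
    have hβm : β.map hp.continuous = (d.symm.trans ((α.map hp.continuous).trans d)
        : Path (p z₁) (p z₁)) := by
      rw [hβ, Path.map_trans, Path.map_trans, ← Path.map_symm, hd]
    rw [hβm, pathHom_trans, pathHom_trans, pathHom_symm]
    have hα' : pathHom (α.map hp.continuous)
        = D ≫ Groupoid.inv Sq ≫ (Sq ≫ G ≫ Groupoid.inv Sq) ≫
          Groupoid.inv (D ≫ Groupoid.inv Sq) := by
      rw [show pathHom (α.map hp.continuous) = (g * elt * g⁻¹) from hα,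
        e3, e2, e1]
      simp [Category.assoc]
    rw [hα']
    simp only [Groupoid.inv_eq_inv]
    simp
  have hhom : Path.Homotopic (β.map hp.continuous) γcast := Quotient.exact hfinal
  have := lift_endpoint_eq hp hhom β γ rfl (fun t => rfl) (fun t => rfl)
  exact this.symm

end Core

/-- Remark after Proposition 3.1: if the Hawking cover `p : E' → E` associated to the
subgroup `i_*π₁(S, x)` of `π₁(E, x)` is a normal covering, then `p` maps *every* path
component of `p⁻¹(S)` homeomorphically onto `S`. -/
theorem every_component_homeomorphic_of_normal
    {E E' : Type u} [TopologicalSpace E] [TopologicalSpace E']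
    [ConnectedSpace E] [LocallyPathConnectedSpace E]
    (S : Set E) (hSpc : IsPathConnected S) [LocallyPathConnectedSpace S]
    (p : E' → E) (hp : IsCoveringMap p) [PathConnectedSpace E']
    (xh : E') (hmem : p xh ∈ S)
    (hrange : (piMap ⟨p, hp.continuous⟩ xh).range
      = (piMap ⟨(Subtype.val : S → E), continuous_subtype_val⟩ ⟨p xh, hmem⟩).range)
    (hnormal : (piMap ⟨p, hp.continuous⟩ xh).range.Normal) :
    ∀ yh ∈ p ⁻¹' S,
      ∃ h : (pathComponentIn (p ⁻¹' S) yh) ≃ₜ S,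
        ∀ z : pathComponentIn (p ⁻¹' S) yh, (h z : E) = p (z : E') := by
  intro yh hyh
  set C : Set E' := pathComponentIn (p ⁻¹' S) yh with hC
  have hCsub : C ⊆ p ⁻¹' S := pathComponentIn_subset
  set φ : C → S := fun z => ⟨p z.1, hCsub z.2⟩ with hφ
  have hφc : Continuous φ := (hp.continuous.comp continuous_subtype_val).subtype_mk _
  -- injectivity
  have hinj : Function.Injective φ := by
    rintro ⟨z₁, hz₁⟩ ⟨z₂, hz₂⟩ h
    have hpz : p z₂ = p z₁ := (congrArg Subtype.val h).symm
    have hj : JoinedIn (p ⁻¹' S) z₁ z₂ :=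
      (JoinedIn.symm hz₁).trans hz₂
    obtain ⟨γ, hγ⟩ := hj
    exact Subtype.ext (inj_core S hSpc p hp xh hmem hrange hnormal (hCsub hz₁) γ hγ hpz).symm
  -- surjectivity
  have hsurj : Function.Surjective φ := by
    rintro ⟨s, hs⟩
    obtain ⟨σ, hσmem⟩ := hSpc.joinedIn _ hyh _ hs
    obtain ⟨e', Γ, hΓ⟩ := path_lift hp σ yh rfl
    have hΓS : ∀ t, Γ t ∈ p ⁻¹' S := fun t => by
      rw [Set.mem_preimage, hΓ]; exact hσmem t
    have he'C : e' ∈ C := by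
      have : JoinedIn (p ⁻¹' S) yh e' := ⟨Γ, hΓS⟩
      exact this
    refine ⟨⟨e', he'C⟩, Subtype.ext ?_⟩
    show p e' = s
    have : p (Γ 1) = σ 1 := hΓ 1
    simpa using this
  -- openness
  have hopen : IsOpenMap φ := by
    intro O hO
    rw [isOpen_induced_iff] at hO
    obtain ⟨O', hO'o, rfl⟩ := hO
    rw [isOpen_iff_mem_nhds]
    rintro _ ⟨⟨z, hzC⟩, hzO, rfl⟩
    obtain ⟨e, hze, hpe⟩ := hp.isLocalHomeomorph z
    set V' : Set E' := e.source ∩ O' with hV'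
    have hV'o : IsOpen V' := e.open_source.inter hO'o
    have hzV' : z ∈ V' := ⟨hze, hzO⟩
    have himg : IsOpen (e '' V') := e.isOpen_image_of_subset_source hV'o Set.inter_subset_left
    have hpz_mem : p z ∈ e '' V' := ⟨z, hzV', (congrFun hpe z).symm⟩
    set x₀S : S := ⟨p z, hCsub hzC⟩ with hx₀S
    have htarget : (Subtype.val ⁻¹' (e '' V') : Set S) ∈ nhds x₀S :=
      (himg.preimage continuous_subtype_val).mem_nhds hpz_mem
    obtain ⟨U, ⟨hUn, hUpc⟩, hUsub⟩ := (path_connected_basis x₀S).mem_iff.mp htarget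
    apply Filter.mem_of_superset hUn
    intro u huU
    have hx₀U : x₀S ∈ U := mem_of_mem_nhds hUn
    obtain ⟨ρ, hρU⟩ := hUpc.joinedIn _ hx₀U _ huU
    have hρtgt : ∀ t, ((ρ t : S) : E) ∈ e.target := fun t => by
      obtain ⟨v, hvV', hv⟩ := hUsub (hρU t)
      rw [← hv]
      exact e.map_source hvV'.1
    set w : unitInterval → E' := fun t => e.symm ((ρ t : S) : E) with hw
    have hwc : Continuous w :=
      e.continuousOn_symm.comp_continuous
        (continuous_subtype_val.comp ρ.continuous) hρtgt
    have hw0 : w 0 = z := by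
      rw [hw]
      simp only [ρ.source]
      show e.symm ((x₀S : E)) = z
      rw [hx₀S]
      show e.symm (p z) = z
      rw [congrFun hpe z]
      exact e.left_inv hze
    have hwp : ∀ t, p (w t) = ((ρ t : S) : E) := fun t => by
      rw [hw, congrFun hpe _]
      exact e.right_inv (hρtgt t)
    have hwS : ∀ t, w t ∈ p ⁻¹' S := fun t => by
      rw [Set.mem_preimage, hwp t]
      exact (ρ t : S).2
    have hw1V' : w 1 ∈ V' := by
      obtain ⟨v, hvV', hv⟩ := hUsub (hρU 1)
      have : w 1 = v := by
        rw [hw]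
        show e.symm ((ρ 1 : S) : E) = v
        rw [← hv, e.left_inv hvV'.1]
      rw [this]; exact hvV'
    have hw1C : w 1 ∈ C := by
      have hj : JoinedIn (p ⁻¹' S) z (w 1) := ⟨(⟨⟨w, hwc⟩, hw0, rfl⟩ : Path z (w 1)), hwS⟩
      exact (hzC : JoinedIn (p ⁻¹' S) yh z).trans hj
    refine ⟨⟨w 1, hw1C⟩, hw1V'.2, ?_⟩
    apply Subtype.ext
    show p (w 1) = (u : E)
    rw [hwp 1]
    simp only [ρ.target]
  refine ⟨Equiv.toHomeomorphOfContinuousOpen (Equiv.ofBijective φ ⟨hinj, hsurj⟩) hφc hopen,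
    fun z => rfl⟩
end

section
/- Let E be a path-connected, locally path-connected topological space, let S ⊆ E be a path-connected subspace with inclusion map i : S → E, and let x ∈ S. Suppose i_* : π₁(S, x) → π₁(E, x) is surjective. Let q : Ē → E be a covering map with Ē path-connected. Then q⁻¹(S) is path-connected. -/
open CategoryTheory

section Lifting
open unitInterval Set Topology
variable {E' E : Type*} [TopologicalSpace E'] [TopologicalSpace E] {q : E' → E}

/-- Local homotopy lifting: around each point of `A`, a continuous map `A × I → E`
with a lift of its time-`0` slice lifts on a neighborhood. -/
theorem IsCoveringMap.exists_local_lift (hq : IsCoveringMap q)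
    {A : Type*} [TopologicalSpace A] (H : C(A × I, E)) (g : A → E')
    (hgc : Continuous g) (hg0 : ∀ a, q (g a) = H (a, 0)) (a : A) :
    ∃ N : Set A, IsOpen N ∧ a ∈ N ∧ ∃ G : A × I → E',
      ContinuousOn G (N ×ˢ (univ : Set I)) ∧
      (∀ p ∈ N ×ˢ (univ : Set I), q (G p) = H p) ∧
      (∀ a' ∈ N, G (a', 0) = g a') := by
  classical
  -- a cover of I by preimages of evenly covered base sets along the slice `H (a, ·)`
  set c : I → Set I := fun i => (fun s => H (a, s)) ⁻¹' (hq (H (a, i))).2.choose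
    with hc
  have hcopen : ∀ i, IsOpen (c i) :=
    fun i => ((hq (H (a, i))).2.choose_spec.2.1).preimage
      (H.continuous.comp (Continuous.prodMk_right a))
  have hccover : univ ⊆ ⋃ i, c i := fun s _ =>
    mem_iUnion.mpr ⟨s, (hq (H (a, s))).2.choose_spec.1⟩
  obtain ⟨t, ht0, htmono, ⟨n₀, htn₀⟩, htc⟩ :=
    exists_monotone_Icc_subset_open_cover_unitInterval hcopen hccover
  -- build lift on `N ×ˢ Icc 0 (t n)` by induction on `n`
  have key : ∀ n : ℕ, ∃ N : Set A, IsOpen N ∧ a ∈ N ∧ ∃ G : A × I → E',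
      ContinuousOn G (N ×ˢ Icc 0 (t n)) ∧
      (∀ p ∈ N ×ˢ Icc 0 (t n), q (G p) = H p) ∧
      (∀ a' ∈ N, G (a', 0) = g a') := by
    intro n
    induction n with
    | zero =>
      refine ⟨univ, isOpen_univ, mem_univ a, fun p => g p.1,
        (hgc.comp continuous_fst).continuousOn, fun p hp => ?_, fun a' _ => rfl⟩
      have : p.2 = 0 := le_antisymm (ht0 ▸ hp.2.2) p.2.2.1
      rw [hg0 p.1, ← this]
    | succ n ih =>
      obtain ⟨N, hNopen, haN, G, hGc, hGlift, hG0⟩ := ih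
      obtain ⟨i, hi⟩ := htc n
      haveI : Nonempty ↥(q ⁻¹' {H (a, i)}) := by
        obtain ⟨-, -, -, H', -⟩ := (hq (H (a, i))).2.choose_spec
        refine ⟨(H' ⟨G (a, t n), ?_⟩).2⟩
        change q (G (a, t n)) ∈ (hq (H (a, i))).2.choose
        rw [hGlift (a, t n) ⟨haN, (t n).2.1, le_refl _⟩]
        exact hi ⟨le_refl _, htmono (Nat.le_succ n)⟩
      set T := (hq (H (a, i))).toTrivialization with hT
      haveI : DiscreteTopology ↥(q ⁻¹' {H (a, i)}) := (hq (H (a, i))).1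
      -- tube lemma: a neighborhood N' of a with H (N' ×ˢ Icc (t n) (t (n+1))) ⊆ T.baseSet
      have htube : {a} ×ˢ Icc (t n) (t (n + 1)) ⊆ H ⁻¹' T.baseSet := by
        rintro ⟨a', s⟩ ⟨(rfl : a' = a), hs⟩
        exact hi hs
      obtain ⟨N', V, hN'open, -, haN', hIccV, hsub⟩ :=
        generalized_tube_lemma isCompact_singleton isClosed_Icc.isCompact
          (T.open_baseSet.preimage H.continuous) htube
      have hbase : ∀ a' ∈ N', ∀ s ∈ Icc (t n) (t (n + 1)), H (a', s) ∈ T.baseSet :=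
        fun a' ha' s hs => hsub ⟨ha', hIccV hs⟩
      have haN'' : a ∈ N' := singleton_subset_iff.mp haN'
      -- the fiber coordinate of `G (·, t n)` is locally constant; shrink to where it is `c0`
      have h0tn : (0 : I) ≤ t n := (t n).2.1
      have htn1 : t n ≤ t (n + 1) := htmono (Nat.le_succ n)
      set φ : A → ↥(q ⁻¹' {H (a, i)}) := fun a' => (T (G (a', t n))).2 with hφ
      have hGsrc : ∀ a' ∈ N ∩ N', G (a', t n) ∈ T.source := by
        intro a' ha'
        rw [T.mem_source, hGlift (a', t n) ⟨ha'.1, h0tn, le_refl _⟩]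
        exact hbase a' ha'.2 (t n) ⟨le_refl _, htn1⟩
      have hφc : ContinuousOn φ (N ∩ N') := by
        have h1 : ContinuousOn (fun a' => G (a', t n)) (N ∩ N') := by
          refine (hGc.comp ((continuous_id.prodMk continuous_const).continuousOn) ?_)
          exact fun a' ha' => ⟨ha'.1, h0tn, le_refl _⟩
        exact (continuous_snd.comp_continuousOn
          ((T.continuousOn_toFun.comp h1) hGsrc))
      have hφa : φ ⁻¹' {φ a} ∈ nhds a := by
        have : ContinuousAt φ a :=
          hφc.continuousAt (((hNopen.inter hN'open).mem_nhds ⟨haN, haN''⟩))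
        exact this ((isOpen_discrete {φ a}).mem_nhds (mem_singleton _))
      obtain ⟨O, hOsub, hOopen, haO⟩ :=
        mem_nhds_iff.mp (Filter.inter_mem ((hNopen.inter hN'open).mem_nhds ⟨haN, haN''⟩) hφa)
      set c0 := φ a with hc0
      refine ⟨O, hOopen, haO,
        fun p => if p.2 ≤ t n then G p else T.toPartialHomeomorph.symm (H p, c0),
        ?_, ?_, ?_⟩
      · -- continuity
        apply ContinuousOn.if
        · rintro ⟨a', s⟩ ⟨hp, hfr⟩
          have hfr' : s ∈ frontier (Iic (t n)) :=
            Continuous.frontier_preimage_subset continuous_snd (Iic (t n)) hfr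
          have hs : s = t n := frontier_Iic_subset _ hfr'
          subst hs
          have ha' := hOsub hp.1
          have hmem := hGsrc a' ha'.1
          have hcc : (T (G (a', t n))).2 = c0 := ha'.2
          have hql : q (G (a', t n)) = H (a', t n) :=
            hGlift (a', t n) ⟨ha'.1.1, h0tn, le_refl _⟩
          rw [← hcc, ← hql]
          exact (T.symm_apply_mk_proj hmem).symm
        · refine hGc.mono ?_
          rintro ⟨a', s⟩ ⟨hp, hs⟩
          have hs' : s ≤ t n := by
            have := closure_mono (fun z (hz : z ∈ {p : A × I | p.2 ≤ t n}) =>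
              (hz : z ∈ Prod.snd ⁻¹' Iic (t n)))
            have hcl : closure {p : A × I | p.2 ≤ t n} ⊆ Prod.snd ⁻¹' Iic (t n) :=
              closure_minimal (fun z hz => hz) (isClosed_Iic.preimage continuous_snd)
            exact hcl hs
          exact ⟨(hOsub hp.1).1.1, hp.2.1, hs'⟩
        · have hcl : closure {p : A × I | ¬ p.2 ≤ t n} ⊆ Prod.snd ⁻¹' Ici (t n) := by
            refine closure_minimal ?_ (isClosed_Ici.preimage continuous_snd)
            exact fun z hz => le_of_lt (lt_of_not_ge hz)
          refine ContinuousOn.comp (T.toPartialHomeomorph.continuousOn_symm)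
            ((H.continuous.prodMk continuous_const).continuousOn) ?_
          rintro ⟨a', s⟩ ⟨hp, hs⟩
          rw [T.mem_target]
          exact hbase a' (hOsub hp.1).1.2 s ⟨hcl hs, hp.2.2⟩
      · -- lifts H
        rintro ⟨a', s⟩ ⟨ha', hs⟩
        by_cases h : s ≤ t n
        · simp only [h, if_true]
          exact hGlift (a', s) ⟨(hOsub ha').1.1, hs.1, h⟩
        · simp only [h, if_false]
          exact T.proj_symm_apply' (hbase a' (hOsub ha').1.2 s ⟨le_of_lt (lt_of_not_ge h), hs.2⟩)
      · intro a' ha'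
        simp only [h0tn, if_true]
        exact hG0 a' (hOsub ha').1.1
  obtain ⟨N, hNopen, haN, G, hGc, hGlift, hG0⟩ := key n₀
  have h1 : Icc (0 : I) (t n₀) = univ := by
    rw [htn₀ n₀ (le_refl n₀)]
    exact eq_univ_of_forall fun s => ⟨s.2.1, s.2.2⟩
  exact ⟨N, hNopen, haN, G, h1 ▸ hGc, h1 ▸ hGlift, hG0⟩


/-- Homotopy lifting property for covering maps. -/
theorem IsCoveringMap.exists_lift (hq : IsCoveringMap q)
    {A : Type*} [TopologicalSpace A] (H : C(A × I, E)) (g : A → E')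
    (hgc : Continuous g) (hg0 : ∀ a, q (g a) = H (a, 0)) :
    ∃ G : C(A × I, E'), (∀ p, q (G p) = H p) ∧ ∀ a, G (a, 0) = g a := by
  classical
  choose N hNopen haN G hGc hGlift hG0 using hq.exists_local_lift H g hgc hg0
  -- the local lifts agree on slices, by uniqueness of path lifts
  have agree : ∀ a b : A, b ∈ N a → ∀ s : I, G b (b, s) = G a (b, s) := by
    intro a b hb
    have h1 : Continuous (fun s : I => G b (b, s)) :=
      (hGc b).comp_continuous (continuous_const.prodMk continuous_id)
        (fun s => ⟨haN b, mem_univ s⟩)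
    have h2 : Continuous (fun s : I => G a (b, s)) :=
      (hGc a).comp_continuous (continuous_const.prodMk continuous_id)
        (fun s => ⟨hb, mem_univ s⟩)
    have := hq.eq_of_comp_eq h1 h2 (funext fun s => by
      rw [Function.comp_apply, Function.comp_apply,
        hGlift b (b, s) ⟨haN b, mem_univ s⟩, hGlift a (b, s) ⟨hb, mem_univ s⟩]) 0
      (by rw [hG0 b b (haN b), hG0 a b hb])
    exact fun s => congrFun this s
  refine ⟨⟨fun p => G p.1 p, ?_⟩, fun p => hGlift p.1 p ⟨haN p.1, mem_univ p.2⟩,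
    fun a => hG0 a a (haN a)⟩
  rw [continuous_iff_continuousAt]
  rintro ⟨a, s⟩
  have hev : ∀ p' ∈ (N a) ×ˢ (univ : Set I), G p'.1 p' = G a p' := by
    rintro ⟨b, s'⟩ ⟨hb, -⟩
    exact agree a b hb s'
  have hGa : ContinuousAt (G a) (a, s) :=
    (hGc a).continuousAt (((hNopen a).prod isOpen_univ).mem_nhds ⟨haN a, mem_univ s⟩)
  refine hGa.congr ?_
  filter_upwards [((hNopen a).prod isOpen_univ).mem_nhds
    (⟨haN a, mem_univ s⟩ : (a, s) ∈ (N a) ×ˢ (univ : Set I))] with p' hp'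
  exact (hev p' hp').symm

/-- Path lifting for covering maps. -/
theorem IsCoveringMap.exists_path_lift (hq : IsCoveringMap q)
    {x y : E} (γ : Path x y) (e : E') (he : q e = x) :
    ∃ Γ : C(I, E'), (∀ s, q (Γ s) = γ s) ∧ Γ 0 = e := by
  let H : C(PUnit.{1} × I, E) := ⟨fun p => γ p.2, γ.continuous.comp continuous_snd⟩
  obtain ⟨G, hG, hG0⟩ := hq.exists_lift H
    (fun _ => e) continuous_const (fun _ => by show q e = γ 0; rw [he, Path.source])
  exact ⟨⟨fun s => G (PUnit.unit, s),
    G.continuous.comp (continuous_const.prodMk continuous_id)⟩,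
    fun s => hG (PUnit.unit, s), hG0 PUnit.unit⟩

/-- Lifts of homotopic paths starting at the same point end at the same point. -/
theorem IsCoveringMap.lift_end_eq (hq : IsCoveringMap q)
    {x y : E} {γ₀ γ₁ : Path x y} (h : γ₀.Homotopic γ₁)
    (Γ₀ Γ₁ : C(I, E')) (h₀ : ∀ s, q (Γ₀ s) = γ₀ s) (h₁ : ∀ s, q (Γ₁ s) = γ₁ s)
    (he : Γ₀ 0 = Γ₁ 0) : Γ₀ 1 = Γ₁ 1 := by
  obtain ⟨Hh⟩ := h
  obtain ⟨G, hG, hG0⟩ := hq.exists_lift Hh.toContinuousMap (fun _ => Γ₀ 0) continuous_const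
    (fun a => by
      have : Hh (a, 0) = γ₀ 0 := Hh.eq_fst a (by norm_num)
      rw [h₀ 0]; exact this.symm ▸ rfl)
  have mem0 : (0 : I) ∈ ({0, 1} : Set I) := Or.inl rfl
  have mem1 : (1 : I) ∈ ({0, 1} : Set I) := Or.inr rfl
  have u0 : (fun s : I => G (0, s)) = ⇑Γ₀ :=
    hq.eq_of_comp_eq (G.continuous.comp (continuous_const.prodMk continuous_id))
      Γ₀.continuous
      (funext fun s => by
        simp only [Function.comp_apply]
        rw [hG (0, s), h₀ s]
        exact Hh.apply_zero s)
      0 (hG0 0)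
  have u1 : (fun s : I => G (1, s)) = ⇑Γ₁ :=
    hq.eq_of_comp_eq (G.continuous.comp (continuous_const.prodMk continuous_id))
      Γ₁.continuous
      (funext fun s => by
        simp only [Function.comp_apply]
        rw [hG (1, s), h₁ s]
        exact Hh.apply_one s)
      0 (by rw [hG0 1, he])
  have uc : G (0, 1) = G (1, 1) :=
    hq.const_of_comp (G.continuous.comp (continuous_id.prodMk continuous_const))
      (fun a a' => by
        show q (G (a, 1)) = q (G (a', 1))
        rw [hG (a, 1), hG (a', 1)]
        change Hh (a, 1) = Hh (a', 1)
        rw [Hh.eq_fst a mem1, Hh.eq_fst a' mem1]) 0 1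
  calc Γ₀ 1 = G (0, 1) := (congrFun u0 1).symm
    _ = G (1, 1) := uc
    _ = Γ₁ 1 := congrFun u1 1


theorem IsCoveringMap.surjective' (hq : IsCoveringMap q) [Nonempty E'] [PreconnectedSpace E] :
    Function.Surjective q := by
  have hclopen : IsClopen (Set.range q) := by
    constructor
    · rw [← isOpen_compl_iff]
      refine isOpen_iff_forall_mem_open.mpr fun x hx => ?_
      obtain ⟨_, U, hxU, hU, -, H, -⟩ := hq x
      refine ⟨U, fun y hy hyr => ?_, hU, hxU⟩
      obtain ⟨e, rfl⟩ := hyr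
      exact hx ⟨(H ⟨e, hy⟩).2.1, (H ⟨e, hy⟩).2.2⟩
    · exact hq.isOpenMap.isOpen_range
  have h := hclopen.eq_univ (Set.range_nonempty q)
  exact fun x => by
    have : x ∈ Set.range q := h ▸ Set.mem_univ x
    exact this

attribute [local instance] Path.Homotopic.setoid

end Lifting

attribute [local instance] Path.Homotopic.setoid

open CategoryTheory

universe u

/-- First step of Proposition 3.2: if the inclusion `i : S → E` is surjective on
fundamental groups, then the preimage `q⁻¹(S)` of `S` under any covering
`q : E' → E` with path-connected total space is path-connected. -/
theorem preimage_pathConnected_of_pi1_surjective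
    {E E' : Type u} [TopologicalSpace E] [TopologicalSpace E']
    [PathConnectedSpace E] [LocallyPathConnectedSpace E]
    (S : Set E) (hSpc : IsPathConnected S)
    (x : E) (hx : x ∈ S)
    (hsurj : Function.Surjective
      (piMap ⟨(Subtype.val : S → E), continuous_subtype_val⟩ ⟨x, hx⟩))
    (q : E' → E) (hq : IsCoveringMap q) [PathConnectedSpace E'] :
    IsPathConnected (q ⁻¹' S) := by
  haveI : Nonempty E' := PathConnectedSpace.nonempty
  obtain ⟨x', hqx'⟩ := hq.surjective' x
  have hx' : x' ∈ q ⁻¹' S := by rw [Set.mem_preimage, hqx']; exact hx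
  refine ⟨x', hx', ?_⟩
  intro y' hy'
  obtain ⟨Γ⟩ : Nonempty (Path x' y') := ⟨PathConnectedSpace.somePath x' y'⟩
  let α : Path x (q y') := (Γ.map hq.continuous).cast hqx'.symm rfl
  have hαt : ∀ s, α s = q (Γ s) := fun s => rfl
  obtain ⟨β, hβS⟩ := hSpc.joinedIn x hx (q y') hy'
  let L : Path x x := α.trans β.symm
  let gL : FundamentalGroup E x :=
    (⟦L⟧ : Path.Homotopic.Quotient x x)
  obtain ⟨d, hd⟩ := hsurj gL
  obtain ⟨δ, hδ⟩ := Quotient.exists_rep (d : Path.Homotopic.Quotient (⟨x, hx⟩ : S) ⟨x, hx⟩)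
  have hmap : (⟦δ.map continuous_subtype_val⟧ : Path.Homotopic.Quotient x x) = ⟦L⟧ := by
    have h1 := hd
    have h1' : (FundamentalGroupoid.fundamentalGroupoidFunctor.map
        (X := TopCat.of ↥S) (Y := TopCat.of E)
        (TopCat.ofHom ⟨(Subtype.val : S → E), continuous_subtype_val⟩)).map d
        = (⟦L⟧ : Path.Homotopic.Quotient x x) := h1
    rw [← hδ] at h1'
    exact (Path.Homotopic.Quotient.mk_map δ
      ⟨(Subtype.val : S → E), continuous_subtype_val⟩).trans h1'
  -- `δ.map ι` is homotopic to `L = α.trans β.symm`; hence `(δ.map ι).trans β` is homotopic to `α`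
  have h2 : (δ.map continuous_subtype_val).Homotopic L := Quotient.eq.mp hmap
  have h3 : ((δ.map continuous_subtype_val).trans β).Homotopic α :=
    ((Path.Homotopic.hcomp h2 (Path.Homotopic.refl β)).trans
      ⟨Path.Homotopy.transAssoc α β.symm β⟩).trans
      ((Path.Homotopic.hcomp (Path.Homotopic.refl α)
        ⟨(Path.Homotopy.reflSymmTrans β).symm⟩).trans ⟨Path.Homotopy.transRefl α⟩)
  -- lift `δ.map ι` from `x'`, then lift `β` from its endpoint
  obtain ⟨Δ, hΔlift, hΔ0⟩ := hq.exists_path_lift (δ.map continuous_subtype_val) x' hqx'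
  have hqΔ1 : q (Δ 1) = x := by rw [hΔlift 1]; exact Path.target _
  obtain ⟨B, hBlift, hB0⟩ := hq.exists_path_lift β (Δ 1) hqΔ1
  let ΔP : Path x' (Δ 1) := { toContinuousMap := Δ, source' := hΔ0, target' := rfl }
  let BP : Path (Δ 1) (B 1) := { toContinuousMap := B, source' := hB0, target' := rfl }
  have hTlift : ∀ s, q ((ΔP.trans BP) s) = ((δ.map continuous_subtype_val).trans β) s := by
    intro s
    rw [Path.trans_apply, Path.trans_apply]
    split_ifs with h
    · exact hΔlift _
    · exact hBlift _
  have hend : (ΔP.trans BP) 1 = Γ 1 :=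
    hq.lift_end_eq h3 (ΔP.trans BP).toContinuousMap Γ.toContinuousMap hTlift
      (fun s => (hαt s).symm)
      (by
        show (ΔP.trans BP) 0 = Γ 0
        rw [Path.source, Path.source])
  have hBy : B 1 = y' := by
    have h4 : (ΔP.trans BP) 1 = B 1 := Path.target _
    rw [← h4, hend]; exact Path.target Γ
  refine ⟨(ΔP.trans BP).cast rfl hBy.symm, fun s => ?_⟩
  show (ΔP.trans BP) s ∈ q ⁻¹' S
  rw [Set.mem_preimage, hTlift s, Path.trans_apply]
  split_ifs with h
  · exact Subtype.coe_prop _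
  · exact hβS _
end

section
/- Let E be a connected, locally path-connected topological space, let S ⊆ E be a path-connected, locally path-connected subspace with inclusion map i : S → E, and let x ∈ S. Suppose i_* : π₁(S, x) → π₁(E, x) is an isomorphism. Let p' : S̄ → S be a covering map with S̄ path-connected and let s̄ ∈ p'⁻¹(x). Let q : Ē → E be a covering map with Ē path-connected and let x̄ ∈ q⁻¹(x) satisfy q_*(π₁(Ē, x̄)) = (i ∘ p')_*(π₁(S̄, s̄)) as subgroups of π₁(E, x). Let φ̄ : S̄ → Ē be a continuous map with q ∘ φ̄ = i ∘ p' and φ̄(s̄) = x̄. Then φ̄ is a homeomorphism from S̄ onto q⁻¹(S) (with its subspace topology): φ̄ is injective, its image equals q⁻¹(S), and it is a homeomorphism onto its image. -/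
open CategoryTheory

universe u

/-- Transport of fundamental groups along an equality of basepoints. -/
noncomputable def pi1Cast {X : Type u} [TopologicalSpace X] {a b : X} (h : a = b) :
    FundamentalGroup X a ≃* FundamentalGroup X b := by
  subst h; exact MulEquiv.refl _


open unitInterval Set

noncomputable section CoveringLift

variable {Y B : Type*} [TopologicalSpace Y] [TopologicalSpace B] {q : Y → B}

/-- partition points k/n clamped to 1, as elements of I -/
def uPt (n k : ℕ) : I := ⟨min ((k : ℝ) / n) 1, le_min (by positivity) zero_le_one, min_le_right _ _⟩

lemma uPt_zero (n : ℕ) : uPt n 0 = 0 := by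
  simp [uPt]

lemma uPt_last {n : ℕ} (hn : n ≠ 0) : uPt n n = 1 := by
  have : (n : ℝ) / n = 1 := div_self (by exact_mod_cast hn)
  simp [uPt, this]

lemma uPt_mono (n : ℕ) {j k : ℕ} (h : j ≤ k) : uPt n j ≤ uPt n k := by
  simp only [uPt, Subtype.mk_le_mk]
  exact min_le_min (div_le_div_of_nonneg_right (a := (j : ℝ)) (b := (k : ℝ)) (by exact_mod_cast h) (Nat.cast_nonneg n)) le_rfl

lemma uPt_succ_le (n k : ℕ) : (uPt n (k+1) : ℝ) ≤ (uPt n k : ℝ) + 1 / n := by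
  rcases Nat.eq_zero_or_pos n with hn | hn
  · subst hn; simp [uPt]
  have hsum : ((k:ℝ)+1) / n = (k:ℝ)/n + 1/n := by ring
  simp only [uPt, Nat.cast_add, Nat.cast_one]
  rcases le_total ((k:ℝ)/n) 1 with h | h
  · rw [min_eq_left h, hsum]
    exact min_le_left _ _
  · rw [min_eq_right h, hsum]
    have : (0:ℝ) ≤ 1/n := by positivity
    calc min ((k:ℝ)/n + 1/n) 1 ≤ 1 := min_le_right _ _
    _ ≤ 1 + 1/n := by linarith

lemma dist_uPt_lt {n : ℕ} {δ : ℝ} (hδ : 1 / n < δ) {k : ℕ} {t : I}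
    (ht : t ∈ Icc (uPt n k) (uPt n (k+1))) : dist t (uPt n k) < δ := by
  have h1 : (uPt n k : ℝ) ≤ t := ht.1
  rw [Subtype.dist_eq, Real.dist_eq, abs_of_nonneg (by linarith)]
  have h2 : (t : ℝ) ≤ uPt n (k+1) := ht.2
  have := uPt_succ_le n k
  linarith

/-- Partition lemma. -/
lemma exists_partition [∀ b : B, Nonempty (q ⁻¹' {b})] (hq : IsCoveringMap q) (H : C(I × I, B)) (s₀ : I) :
    ∃ (n : ℕ), n ≠ 0 ∧ ∃ J ∈ nhds s₀, ∀ k < n, ∃ x : B,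
      ∀ s ∈ J, ∀ t ∈ Icc (uPt n k) (uPt n (k+1)),
        H (s, t) ∈ (hq x).toTrivialization.baseSet := by
  have key : ∀ t : I, ∃ (Jt Vt : Set I), IsOpen Jt ∧ IsOpen Vt ∧ s₀ ∈ Jt ∧ t ∈ Vt ∧
      Jt ×ˢ Vt ⊆ H ⁻¹' (hq (H (s₀, t))).toTrivialization.baseSet := by
    intro t
    have hopen : IsOpen (H ⁻¹' (hq (H (s₀, t))).toTrivialization.baseSet) :=
      (hq (H (s₀, t))).toTrivialization.open_baseSet.preimage H.continuous
    have hmem : (s₀, t) ∈ H ⁻¹' (hq (H (s₀, t))).toTrivialization.baseSet :=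
      (hq (H (s₀, t))).mem_toTrivialization_baseSet
    have := hopen.mem_nhds hmem
    rw [mem_nhds_prod_iff'] at this
    obtain ⟨Jt, Vt, hJo, hs, hVo, ht, hsub⟩ := this
    exact ⟨Jt, Vt, hJo, hVo, hs, ht, hsub⟩
  choose Jt Vt hJo hVo hs₀ htV hsub using key
  obtain ⟨F, hF⟩ := isCompact_univ.elim_finite_subcover Vt hVo
    (fun t _ => mem_iUnion.2 ⟨t, htV t⟩)
  obtain ⟨δ, hδ, hball⟩ := lebesgue_number_lemma_of_metric (s := (univ : Set I))
    (c := fun i : F => Vt i) isCompact_univ (fun i => hVo i)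
    (by intro x hx; rcases mem_iUnion₂.1 (hF (mem_univ x)) with ⟨i, hi, hxi⟩;
        exact mem_iUnion.2 ⟨⟨i, hi⟩, hxi⟩)
  set n : ℕ := ⌈1/δ⌉₊ + 1 with hn
  have hn0 : n ≠ 0 := Nat.succ_ne_zero _
  have hδn : 1 / (n:ℝ) < δ := by
    rw [div_lt_iff₀ (by positivity), ← div_lt_iff₀' hδ]
    calc 1/δ ≤ ⌈1/δ⌉₊ := Nat.le_ceil _
    _ < (n : ℝ) := by rw [hn]; exact_mod_cast Nat.lt_succ_self _
  refine ⟨n, hn0, ⋂ i : F, Jt i, ?_, ?_⟩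
  · exact Filter.iInter_mem.2 fun i => (hJo i).mem_nhds (hs₀ i)
  · intro k hk
    obtain ⟨i, hi⟩ := hball (uPt n k) (mem_univ _)
    refine ⟨H (s₀, i), fun s hsJ t ht => hsub i ⟨mem_iInter.1 hsJ i, ?_⟩⟩
    exact hi (by rw [Metric.mem_ball]; exact dist_uPt_lt hδn ht)

lemma unitInterval_zero_le (t : I) : (0 : I) ≤ t := t.2.1
lemma unitInterval_le_one (t : I) : t ≤ (1 : I) := t.2.2

/-- Existence of path lifts through a covering map. -/
lemma IsCoveringMap.exists_lift_s9 (hq : IsCoveringMap q) (γ : C(I, B)) (e : Y)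
    (he : q e = γ 0) : ∃ g : C(I, Y), g 0 = e ∧ ∀ t, q (g t) = γ t := by
  obtain ⟨Γ, hΓ, hΓ0⟩ := hq.exists_path_lifts γ e he.symm
  exact ⟨Γ, hΓ0, fun t => congrFun hΓ t⟩

lemma isPreconnected_Icc_I {a b : I} : _root_.IsPreconnected (Icc a b : Set I) := by
  have himg : (Subtype.val : I → ℝ) '' (Icc a b) = Icc (a : ℝ) (b : ℝ) := by
    apply subset_antisymm
    · rintro - ⟨t, ht, rfl⟩
      exact ⟨ht.1, ht.2⟩
    · rintro r hr
      have hrI : r ∈ I := ⟨le_trans a.2.1 hr.1, le_trans hr.2 b.2.2⟩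
      exact ⟨⟨r, hrI⟩, ⟨hr.1, hr.2⟩, rfl⟩
  rw [← Topology.IsInducing.subtypeVal.isPreconnected_image, himg]
  exact isPreconnected_Icc

/-- Monodromy: lifts of homotopic paths (rel endpoints) starting at the same point
end at the same point. -/
lemma IsCoveringMap.lift_end_unique (hq : IsCoveringMap q) {x₀ x₁ : B} {γ₀ γ₁ : Path x₀ x₁}
    (h : γ₀.Homotopic γ₁) {g₀ g₁ : C(I, Y)} (hg₀ : ∀ t, q (g₀ t) = γ₀ t)
    (hg₁ : ∀ t, q (g₁ t) = γ₁ t) (h0 : g₀ 0 = g₁ 0) : g₀ 1 = g₁ 1 := by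
  have h₀' : γ₀.toContinuousMap 0 = q (g₀ 0) := by rw [hg₀ 0]; rfl
  have h₁' : γ₁.toContinuousMap 0 = q (g₀ 0) := by rw [hg₀ 0]; simp
  have E0 : g₀ = hq.liftPath _ _ h₀' := (hq.eq_liftPath_iff' h₀').2 ⟨funext fun t => hg₀ t, rfl⟩
  have E1 : g₁ = hq.liftPath _ _ h₁' := (hq.eq_liftPath_iff' h₁').2 ⟨funext fun t => hg₁ t, h0.symm⟩
  rw [E0, E1]
  exact hq.liftPath_apply_one_eq_of_homotopicRel h _ h₀' h₁'

end CoveringLift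

section Pi1

open CategoryTheory

attribute [local instance] Path.Homotopic.setoid

/-- The fundamental-group element of a loop. -/
noncomputable def loopClass {X : Type u} [TopologicalSpace X] {x : X} (γ : Path x x) :
    FundamentalGroup X x :=
  FundamentalGroup.fromPath (X := TopCat.of X) (x := x) ⟦γ⟧

lemma loopClass_hom {X : Type u} [TopologicalSpace X] {x : X} (γ : Path x x) :
    FundamentalGroup.toPath (loopClass γ) = ⟦γ⟧ := rfl

lemma exists_loopClass {X : Type u} [TopologicalSpace X] {x : X}
    (a : FundamentalGroup X x) : ∃ γ : Path x x, loopClass γ = a := by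
  obtain ⟨γ, hγ⟩ := Quotient.exists_rep (FundamentalGroup.toPath a)
  exact ⟨γ, hγ⟩

lemma loopClass_eq_iff {X : Type u} [TopologicalSpace X] {x : X} (γ γ' : Path x x) :
    loopClass γ = loopClass γ' ↔ Path.Homotopic γ γ' := by
  constructor
  · intro h
    have h2 : FundamentalGroup.toPath (loopClass γ) = FundamentalGroup.toPath (loopClass γ') :=
      congrArg (fun (z : FundamentalGroup X x) => FundamentalGroup.toPath z) h
    rw [loopClass_hom, loopClass_hom] at h2
    exact Quotient.exact h2
  · intro h
    exact Quotient.sound h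

lemma piMap_loopClass {X Y : Type u} [TopologicalSpace X] [TopologicalSpace Y]
    (f : C(X, Y)) (x : X) (γ : Path x x) :
    piMap f x (loopClass γ) = loopClass (γ.map f.continuous) := by
  show (FundamentalGroupoid.fundamentalGroupoidFunctor.map (X := TopCat.of X)
    (Y := TopCat.of Y) (TopCat.ofHom f)).map (⟦γ⟧ : Path.Homotopic.Quotient x x) =
      (⟦γ.map f.continuous⟧ : Path.Homotopic.Quotient (f x) (f x))
  rfl

lemma pi1Cast_loopClass {X : Type u} [TopologicalSpace X] {a b : X} (h : a = b) (γ : Path a a) :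
    pi1Cast h (loopClass γ) = loopClass (γ.cast h.symm h.symm) := by
  subst h
  have hc : γ.cast rfl rfl = γ := by
    ext t
    rfl
  rw [hc]
  rfl

end Pi1


open unitInterval in
/-- Proposition 3.2. -/
theorem lift_homeomorphism_onto_preimage
    {E Sb Eb : Type u} [TopologicalSpace E] [TopologicalSpace Sb] [TopologicalSpace Eb]
    [ConnectedSpace E] [LocallyPathConnectedSpace E]
    (S : Set E) (hSpc : IsPathConnected S) [LocallyPathConnectedSpace S]
    (q : Eb → E) (hq : IsCoveringMap q) [PathConnectedSpace Eb]
    (xb : Eb) (hmem : q xb ∈ S)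
    (hbij : Function.Bijective
      (piMap ⟨(Subtype.val : S → E), continuous_subtype_val⟩ ⟨q xb, hmem⟩))
    (p' : Sb → S) (hp' : IsCoveringMap p') [PathConnectedSpace Sb]
    (sb : Sb) (hsb : p' sb = ⟨q xb, hmem⟩)
    (hrangeq : (piMap ⟨q, hq.continuous⟩ xb).range
      = Subgroup.map (pi1Cast (congrArg Subtype.val hsb)).toMonoidHom
          (piMap ((⟨(Subtype.val : S → E), continuous_subtype_val⟩ : C(S, E)).comp
            ⟨p', hp'.continuous⟩) sb).range)
    (phib : Sb → Eb) (hphib_cont : Continuous phib)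
    (hcomm : ∀ y : Sb, q (phib y) = ((p' y : S) : E))
    (hbase : phib sb = xb) :
    Function.Injective phib ∧ Set.range phib = q ⁻¹' S ∧ Topology.IsEmbedding phib := by
  classical
  have hE : (↑(p' sb) : E) = q xb := congrArg Subtype.val hsb
  -- Translation of `hrangeq`.
  have hrange_loop : ∀ L : Path xb xb, ∃ m : Path sb sb,
      Path.Homotopic
        ((m.map ((⟨(Subtype.val : S → E), continuous_subtype_val⟩ : C(S, E)).comp
            (⟨p', hp'.continuous⟩ : C(Sb, S))).continuous).cast hE.symm hE.symm)
        (L.map hq.continuous) := by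
    intro L
    have h1 : piMap ⟨q, hq.continuous⟩ xb (loopClass L)
        ∈ (piMap ⟨q, hq.continuous⟩ xb).range := ⟨loopClass L, rfl⟩
    rw [hrangeq, Subgroup.mem_map] at h1
    obtain ⟨b', hb', heq⟩ := h1
    rw [MonoidHom.mem_range] at hb'
    obtain ⟨m', hm'⟩ := hb'
    obtain ⟨m, hm⟩ := exists_loopClass m'
    refine ⟨m, ?_⟩
    rw [← loopClass_eq_iff]
    have h3 : piMap ((⟨(Subtype.val : S → E), continuous_subtype_val⟩ : C(S, E)).comp
        ⟨p', hp'.continuous⟩) sb (loopClass m) = b' := by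
      rw [hm]; exact hm'
    have h2 : pi1Cast (congrArg Subtype.val hsb)
        (piMap ((⟨(Subtype.val : S → E), continuous_subtype_val⟩ : C(S, E)).comp
          ⟨p', hp'.continuous⟩) sb (loopClass m))
        = piMap ⟨q, hq.continuous⟩ xb (loopClass L) := by
      rw [h3]; exact heq
    rw [piMap_loopClass, pi1Cast_loopClass, piMap_loopClass] at h2
    exact h2
  -- Translation of the surjectivity of `i_*`.
  have hsurj_loop : ∀ L : Path (q xb) (q xb),
      ∃ τ : Path (⟨q xb, hmem⟩ : S) ⟨q xb, hmem⟩,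
        Path.Homotopic (τ.map continuous_subtype_val) L := by
    intro L
    obtain ⟨a, ha⟩ := hbij.2 (loopClass L)
    obtain ⟨τ, hτ⟩ := exists_loopClass a
    refine ⟨τ, ?_⟩
    rw [← loopClass_eq_iff]
    rw [← hτ, piMap_loopClass] at ha
    exact ha
  -- Translation of the injectivity of `i_*`.
  have hinj_loop : ∀ u v : Path (⟨q xb, hmem⟩ : S) ⟨q xb, hmem⟩,
      Path.Homotopic (u.map continuous_subtype_val) (v.map continuous_subtype_val) →
        Path.Homotopic u v := by
    intro u v huv
    rw [← loopClass_eq_iff]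
    refine hbij.1 ?_
    rw [piMap_loopClass, piMap_loopClass, loopClass_eq_iff]
    exact huv
  -- == Injectivity of `phib` ==
  have hinj : Function.Injective phib := by
    intro a b hab
    set α := PathConnectedSpace.somePath sb a with hα
    set β := PathConnectedSpace.somePath b sb with hβ
    have hpa : p' a = p' b := Subtype.val_injective (by rw [← hcomm a, ← hcomm b, hab])
    set Pα := α.map hp'.continuous with hPα
    set Pβ := β.map hp'.continuous with hPβ
    set W0 := Pα.trans (Pβ.cast hpa rfl) with hW0
    set W : Path (⟨q xb, hmem⟩ : S) ⟨q xb, hmem⟩ := W0.cast hsb.symm hsb.symm with hW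
    set A : Path xb (phib a) := (α.map hphib_cont).cast hbase.symm rfl with hA
    set B1 : Path (phib a) xb := (β.map hphib_cont).cast hab hbase.symm with hB1
    set L : Path xb xb := A.trans B1 with hL
    have hLW : L.map hq.continuous = W.map continuous_subtype_val := by
      ext t
      show q (L t) = (W t : E)
      rw [hL, hW]
      simp only [Path.cast_coe]
      rw [Path.trans_apply, Path.trans_apply]
      split_ifs with h
      · show q (A _) = (Pα _ : E)
        rw [hA, hPα]
        simp only [Path.cast_coe, Path.map_coe, Function.comp_apply]
        exact hcomm _
      · show q (B1 _) = ((Pβ.cast hpa rfl) _ : E)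
        rw [hB1]
        simp only [Path.cast_coe, hPβ, Path.map_coe, Function.comp_apply]
        exact hcomm _
    obtain ⟨m, hmh⟩ := hrange_loop L
    set M : Path (⟨q xb, hmem⟩ : S) ⟨q xb, hmem⟩ :=
      (m.map hp'.continuous).cast hsb.symm hsb.symm with hM
    have hMval : M.map continuous_subtype_val
        = (m.map ((⟨(Subtype.val : S → E), continuous_subtype_val⟩ : C(S, E)).comp
            (⟨p', hp'.continuous⟩ : C(Sb, S))).continuous).cast hE.symm hE.symm := by
      ext t
      rfl
    have hWM : Path.Homotopic W M := by
      refine (hinj_loop M W ?_).symm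
      rw [hMval, ← hLW]
      exact hmh
    obtain ⟨β', hβ'0, hβ'⟩ := hp'.exists_lift_s9 (Pβ.cast hpa rfl).toContinuousMap a
      ((Pβ.cast hpa rfl).source.symm)
    set Pβ' : Path a (β' 1) := ⟨β', hβ'0, rfl⟩ with hPβ'
    set gW : Path sb (β' 1) := α.trans Pβ' with hgW
    have hgWlift : ∀ t, p' (gW t) = W t := by
      intro t
      show p' (gW t) = W0 t
      rw [hgW, hW0, Path.trans_apply, Path.trans_apply]
      split_ifs with h
      · rfl
      · exact hβ' _
    have hgMlift : ∀ t, p' (m t) = M t := by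
      intro t
      rfl
    have hβ'1 : β' 1 = sb := by
      have hml : gW.toContinuousMap 1 = m.toContinuousMap 1 :=
        hp'.lift_end_unique hWM (g₀ := gW.toContinuousMap)
          (g₁ := m.toContinuousMap) hgWlift hgMlift
          (by show gW 0 = m 0; rw [gW.source, m.source])
      have h1 : gW 1 = m 1 := hml
      calc β' 1 = gW 1 := gW.target.symm
      _ = m 1 := h1
      _ = sb := m.target
    have hβfun : ⇑β' = ⇑β := by
      refine hp'.eq_of_comp_eq β'.continuous β.continuous (funext fun t => ?_) 1 ?_
      · show p' (β' t) = p' (β t)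
        rw [hβ' t]
        simp only [Path.cast_coe, hPβ, Path.map_coe, Function.comp_apply]
        rfl
      · show β' 1 = β 1
        rw [hβ'1, β.target]
    calc a = β' 0 := hβ'0.symm
    _ = β 0 := congrFun hβfun 0
    _ = b := β.source
  -- == Range of `phib` ==
  have hrange : Set.range phib = q ⁻¹' S := by
    refine subset_antisymm ?_ ?_
    · rintro - ⟨s, rfl⟩
      show q (phib s) ∈ S
      rw [hcomm s]
      exact (p' s).2
    intro e he
    have heS : q e ∈ S := he
    have hJ : Joined (⟨q xb, hmem⟩ : S) ⟨q e, heS⟩ :=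
      (hSpc.joinedIn (q xb) hmem (q e) heS).joined_subtype
    set α' : Path (⟨q xb, hmem⟩ : S) ⟨q e, heS⟩ := hJ.somePath with hα'
    obtain ⟨g₁, hg₁0, hg₁⟩ := hp'.exists_lift_s9 α'.toContinuousMap sb
      (hsb.trans α'.source.symm)
    set s₁ := g₁ 1 with hs₁
    have hps₁ : p' s₁ = ⟨q e, heS⟩ := by rw [hs₁, hg₁ 1]; exact α'.target
    have hqe'' : q (phib s₁) = q e := by rw [hcomm s₁, hps₁]
    set δ : Path (phib s₁) e := PathConnectedSpace.somePath (phib s₁) e with hδ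
    set w : Path (q xb) (q e) := α'.map continuous_subtype_val with hw
    set qδ : Path (q e) (q e) := (δ.map hq.continuous).cast hqe''.symm rfl with hqδ
    set L : Path (q xb) (q xb) := w.trans (qδ.trans w.symm) with hLd
    obtain ⟨τ, hτh⟩ := hsurj_loop L
    set Aα : Path sb s₁ := ⟨g₁, hg₁0, rfl⟩ with hAα
    set Pw : Path xb (phib s₁) := (Aα.map hphib_cont).cast hbase.symm rfl with hPw
    obtain ⟨ρ, hρ0, hρ⟩ := hq.exists_lift_s9 w.symm.toContinuousMap e
      ((w.symm.source).symm)
    set Pρ : Path e (ρ 1) := ⟨ρ, hρ0, rfl⟩ with hPρ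
    set gL : Path xb (ρ 1) := Pw.trans (δ.trans Pρ) with hgL
    have hgLlift : ∀ t, q (gL t) = L t := by
      intro t
      rw [hgL, hLd, Path.trans_apply, Path.trans_apply]
      split_ifs with h
      · show q (Pw _) = (w _ : E)
        rw [hPw, hw]
        simp only [Path.cast_coe, Path.map_coe, Function.comp_apply]
        rw [hcomm]
        exact congrArg Subtype.val (hg₁ _)
      · rw [Path.trans_apply, Path.trans_apply]
        split_ifs with h2
        · show q (δ _) = qδ _
          rw [hqδ]
          simp only [Path.cast_coe, Path.map_coe, Function.comp_apply]
        · exact hρ _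
    obtain ⟨g₂, hg₂0, hg₂⟩ := hp'.exists_lift_s9 τ.toContinuousMap sb
      (hsb.trans τ.source.symm)
    set s₂ := g₂ 1 with hs₂
    have hps₂ : p' s₂ = ⟨q xb, hmem⟩ := by rw [hs₂, hg₂ 1]; exact τ.target
    set Aσ : Path sb s₂ := ⟨g₂, hg₂0, rfl⟩ with hAσ
    set PE : Path xb (phib s₂) := (Aσ.map hphib_cont).cast hbase.symm rfl with hPE
    have hPElift : ∀ t, q (PE t) = (τ.map continuous_subtype_val) t := by
      intro t
      rw [hPE]
      simp only [Path.cast_coe, Path.map_coe, Function.comp_apply]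
      rw [hcomm]
      exact congrArg Subtype.val (hg₂ _)
    have hends : phib s₂ = ρ 1 := by
      have hml : PE.toContinuousMap 1 = gL.toContinuousMap 1 :=
        hq.lift_end_unique hτh (g₀ := PE.toContinuousMap)
          (g₁ := gL.toContinuousMap) hPElift hgLlift
          (by show PE 0 = gL 0; rw [PE.source, gL.source])
      have h1 : PE 1 = gL 1 := hml
      calc phib s₂ = PE 1 := PE.target.symm
      _ = gL 1 := h1
      _ = ρ 1 := gL.target
    obtain ⟨g₃, hg₃0, hg₃⟩ := hp'.exists_lift_s9 α'.toContinuousMap s₂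
      (hps₂.trans α'.source.symm)
    have hfinal : (fun t => ρ (σ t)) = fun t => phib (g₃ t) := by
      refine hq.eq_of_comp_eq ?_ ?_ (funext fun t => ?_) 0 ?_
      · exact ρ.continuous.comp continuous_symm
      · exact hphib_cont.comp g₃.continuous
      · show q (ρ (σ t)) = q (phib (g₃ t))
        rw [hρ (σ t), hcomm, hg₃]
        show w.symm (σ t) = (α' t : E)
        show w (σ (σ t)) = (α' t : E)
        rw [symm_symm]
        rfl
      · show ρ (σ 0) = phib (g₃ 0)
        rw [symm_zero, hg₃0, ← hends]
    refine ⟨g₃ 1, ?_⟩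
    have hlast := congrFun hfinal 1
    rw [symm_one, hρ0] at hlast
    exact hlast.symm
  -- == Embedding ==
  have hembed : Topology.IsEmbedding phib := by
    rw [Topology.isEmbedding_iff]
    refine ⟨Topology.isInducing_iff_nhds.2 fun a => le_antisymm ?_ ?_, hinj⟩
    · exact Filter.tendsto_iff_comap.1 hphib_cont.continuousAt
    · intro V hV
      rw [Filter.mem_comap]
      obtain ⟨V₀, hV₀sub, hV₀open, haV₀⟩ := mem_nhds_iff.1 hV
      obtain ⟨ep, hep, hpe⟩ := hp'.isLocalHomeomorph a
      obtain ⟨eqh, heqh, hqeh⟩ := hq.isLocalHomeomorph (phib a)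
      set V' := V₀ ∩ ep.source ∩ phib ⁻¹' eqh.source with hV'
      have hV'open : IsOpen V' :=
        (hV₀open.inter ep.open_source).inter (eqh.open_source.preimage hphib_cont)
      have haV' : a ∈ V' := ⟨⟨haV₀, hep⟩, by rw [Set.mem_preimage]; exact heqh⟩
      have hSopen : IsOpen (p' '' V') := hp'.isLocalHomeomorph.isOpenMap V' hV'open
      obtain ⟨U, hUopen, hUeq⟩ := isOpen_induced_iff.1 hSopen
      refine ⟨eqh.source ∩ q ⁻¹' U, ?_, ?_⟩
      · refine (eqh.open_source.inter (hUopen.preimage hq.continuous)).mem_nhds ⟨heqh, ?_⟩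
        rw [Set.mem_preimage, hcomm a]
        have hm : p' a ∈ Subtype.val ⁻¹' U := by rw [hUeq]; exact ⟨a, haV', rfl⟩
        exact hm
      · rintro s ⟨hs1, hs2⟩
        rw [Set.mem_preimage, hcomm s] at hs2
        have hmm : p' s ∈ p' '' V' := by rw [← hUeq]; exact hs2
        obtain ⟨v, hvV', hvps⟩ := hmm
        have hqv : q (phib v) = q (phib s) := by
          rw [hcomm v, hcomm s, hvps]
        have hvs : phib v = phib s := by
          refine eqh.injOn hvV'.2 hs1 ?_
          rw [← congrFun hqeh (phib v), ← congrFun hqeh (phib s)]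
          exact hqv
        have hvseq := hinj hvs
        rw [← hvseq]
        exact hV₀sub hvV'.1.1
  exact ⟨hinj, hrange, hembed⟩
end
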